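/- Let p⁻, p⁺, q⁻, q⁺ be real numbers with 1 < p⁻ ≤ p⁺ and 1 < q⁻ ≤ q⁺, and let A, B, Ā, B̄ ≥ 0 and X, Y ∈ [0,∞) be real numbers satisfying X ≤ A·Y^{1/q⁺} + B·Y^{1/q⁻} and Y ≤ Ā·X^{1/p⁺} + B̄·X^{1/p⁻}. Then there exists a constant C > 0, depending only on p⁻, p⁺, q⁻, q⁺, such that X ≤ C( (A·Ā^{1/q⁺})^{q⁺p⁺/(q⁺p⁺−1)} + (A·B̄^{1/q⁺})^{q⁺p⁻/(q⁺p⁻−1)} + (B·Ā^{1/q⁻})^{q⁻p⁺/(q⁻p⁺−1)} + (B·B̄^{1/q⁻})^{q⁻p⁻/(q⁻p⁻−1)} ). -/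

import Mathlib

open Real

/-- Subadditivity of `rpow` for exponents in `[0,1]` on nonnegative reals. -/
lemma real_rpow_add_le_add_rpow {a b m : ℝ} (ha : 0 ≤ a) (hb : 0 ≤ b)
    (hm0 : 0 ≤ m) (hm1 : m ≤ 1) : (a + b) ^ m ≤ a ^ m + b ^ m := by
  have h := NNReal.rpow_add_le_add_rpow a.toNNReal b.toNNReal hm0 hm1
  have := NNReal.coe_le_coe.mpr h
  push_cast at this
  rwa [Real.coe_toNNReal a ha, Real.coe_toNNReal b hb] at this

/-- Key absorption step: if `X/4 ≤ c * X^θ` with `X > 0`, `0 ≤ c`, `0 < θ < 1`,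
then `X ≤ 4^(1/(1-θ)) * c^(1/(1-θ))`. -/
lemma absorb {X c θ : ℝ} (hX : 0 < X) (hc : 0 ≤ c) (hθ0 : 0 < θ) (hθ1 : θ < 1)
    (h : X / 4 ≤ c * X ^ θ) :
    X ≤ 4 ^ (1 / (1 - θ)) * c ^ (1 / (1 - θ)) := by
  have hXθ : (0:ℝ) < X ^ θ := Real.rpow_pos_of_pos hX θ
  have h1 : X ^ (1 - θ) ≤ 4 * c := by
    have hx : X ^ (1 - θ) * X ^ θ = X := by
      rw [← Real.rpow_add hX]; simp
    have : X ^ (1 - θ) * X ^ θ ≤ (4 * c) * X ^ θ := by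
      rw [hx]; nlinarith
    exact le_of_mul_le_mul_right this hXθ
  have h1θ : (0:ℝ) < 1 - θ := by linarith
  have he : 0 < 1 / (1 - θ) := by positivity
  have h2 : (X ^ (1 - θ)) ^ (1 / (1 - θ)) ≤ (4 * c) ^ (1 / (1 - θ)) :=
    Real.rpow_le_rpow (Real.rpow_nonneg hX.le _) h1 he.le
  have hid : (X ^ (1 - θ)) ^ (1 / (1 - θ)) = X := by
    rw [← Real.rpow_mul hX.le, mul_one_div, div_self (by linarith), Real.rpow_one]
  rwa [hid, Real.mul_rpow (by norm_num) hc] at h2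

theorem iteration_lemma
    (pminus pplus qminus qplus : ℝ)
    (hp1 : 1 < pminus) (hp2 : pminus ≤ pplus)
    (hq1 : 1 < qminus) (hq2 : qminus ≤ qplus) :
    ∃ C : ℝ, 0 < C ∧
      ∀ A B Abar Bbar X Y : ℝ,
        0 ≤ A → 0 ≤ B → 0 ≤ Abar → 0 ≤ Bbar → 0 ≤ X → 0 ≤ Y →
        X ≤ A * Y ^ (1 / qplus) + B * Y ^ (1 / qminus) →
        Y ≤ Abar * X ^ (1 / pplus) + Bbar * X ^ (1 / pminus) →
        X ≤ C * ((A * Abar ^ (1 / qplus)) ^ (qplus * pplus / (qplus * pplus - 1)) +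
          (A * Bbar ^ (1 / qplus)) ^ (qplus * pminus / (qplus * pminus - 1)) +
          (B * Abar ^ (1 / qminus)) ^ (qminus * pplus / (qminus * pplus - 1)) +
          (B * Bbar ^ (1 / qminus)) ^ (qminus * pminus / (qminus * pminus - 1))) := by
  have hp0 : 1 < pplus := lt_of_lt_of_le hp1 hp2
  have hq0 : 1 < qplus := lt_of_lt_of_le hq1 hq2
  -- Exponent bookkeeping
  set E : ℝ := qminus * pminus / (qminus * pminus - 1) with hE
  have hqpm : 1 < qminus * pminus := by nlinarith
  have hEpos : 0 < E := by
    apply div_pos <;> linarith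
  refine ⟨4 ^ E, Real.rpow_pos_of_pos (by norm_num) E, ?_⟩
  intro A B Abar Bbar X Y hA hB hAbar hBbar hX hY h1 h2
  rcases eq_or_lt_of_le hX with hX0 | hXpos
  · rw [← hX0]
    positivity
  -- Generic per-term lemma
  have key : ∀ (q p c : ℝ), 1 < q → qminus ≤ q → 1 < p → pminus ≤ p → 0 ≤ c →
      X / 4 ≤ c * X ^ (1 / (q * p)) →
      X ≤ 4 ^ E * c ^ (q * p / (q * p - 1)) := by
    intro q p c hq hqle hp hple hc hle
    have hqp : 1 < q * p := by nlinarith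
    have hθ0 : 0 < 1 / (q * p) := by positivity
    have hθ1 : 1 / (q * p) < 1 := by
      rw [div_lt_one (by linarith)]; linarith
    have exp_eq : 1 / (1 - 1 / (q * p)) = q * p / (q * p - 1) := by
      rw [one_sub_div (by linarith), one_div_div]
    have h := absorb hXpos hc hθ0 hθ1 hle
    rw [exp_eq] at h
    refine h.trans (mul_le_mul_of_nonneg_right ?_ (by positivity))
    apply Real.rpow_le_rpow_left_iff (x := (4:ℝ)) (by norm_num) |>.mpr
    -- q*p/(q*p-1) ≤ E since qminus*pminus ≤ q*p and x/(x-1) decreasing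
    rw [hE, div_le_div_iff₀ (by linarith) (by linarith)]
    nlinarith [mul_le_mul hqle hple (by linarith) (by linarith)]
  -- Substitute h2 into h1 and expand
  set Z : ℝ := Abar * X ^ (1 / pplus) + Bbar * X ^ (1 / pminus) with hZ
  have hZ0 : 0 ≤ Z := by positivity
  have expand : ∀ q : ℝ, 1 < q →
      Z ^ (1 / q) ≤ Abar ^ (1 / q) * X ^ (1 / (q * pplus))
        + Bbar ^ (1 / q) * X ^ (1 / (q * pminus)) := by
    intro q hq
    have hq' : (0:ℝ) < 1 / q := by positivity
    have h := real_rpow_add_le_add_rpow (a := Abar * X ^ (1 / pplus))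
      (b := Bbar * X ^ (1 / pminus)) (by positivity) (by positivity) hq'.le
      (by rw [div_le_one (by linarith)]; linarith)
    have e1 : (Abar * X ^ (1 / pplus)) ^ (1 / q)
        = Abar ^ (1 / q) * X ^ (1 / (q * pplus)) := by
      rw [Real.mul_rpow hAbar (by positivity), ← Real.rpow_mul hX]
      congr 1
      field_simp
    have e2 : (Bbar * X ^ (1 / pminus)) ^ (1 / q)
        = Bbar ^ (1 / q) * X ^ (1 / (q * pminus)) := by
      rw [Real.mul_rpow hBbar (by positivity), ← Real.rpow_mul hX]
      congr 1
      field_simp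
    rw [e1, e2] at h
    exact h
  have hYZ : ∀ q : ℝ, 1 < q → Y ^ (1 / q) ≤ Z ^ (1 / q) := fun q hq =>
    Real.rpow_le_rpow hY h2 (by positivity)
  have main : X ≤ (A * Abar ^ (1 / qplus)) * X ^ (1 / (qplus * pplus))
      + (A * Bbar ^ (1 / qplus)) * X ^ (1 / (qplus * pminus))
      + (B * Abar ^ (1 / qminus)) * X ^ (1 / (qminus * pplus))
      + (B * Bbar ^ (1 / qminus)) * X ^ (1 / (qminus * pminus)) := by
    have c1 := (hYZ qplus hq0).trans (expand qplus hq0)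
    have c2 := (hYZ qminus hq1).trans (expand qminus hq1)
    have := h1.trans (add_le_add (mul_le_mul_of_nonneg_left c1 hA)
      (mul_le_mul_of_nonneg_left c2 hB))
    nlinarith [this]
  -- One of the four terms is at least X/4
  have hbig : X / 4 ≤ (A * Abar ^ (1 / qplus)) * X ^ (1 / (qplus * pplus))
      ∨ X / 4 ≤ (A * Bbar ^ (1 / qplus)) * X ^ (1 / (qplus * pminus))
      ∨ X / 4 ≤ (B * Abar ^ (1 / qminus)) * X ^ (1 / (qminus * pplus))
      ∨ X / 4 ≤ (B * Bbar ^ (1 / qminus)) * X ^ (1 / (qminus * pminus)) := by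
    by_contra hcon
    push_neg at hcon
    obtain ⟨ha, hb, hc, hd⟩ := hcon
    linarith [main]
  have nn1 : (0:ℝ) ≤ (A * Abar ^ (1 / qplus)) ^ (qplus * pplus / (qplus * pplus - 1)) := by
    positivity
  have nn2 : (0:ℝ) ≤ (A * Bbar ^ (1 / qplus)) ^ (qplus * pminus / (qplus * pminus - 1)) := by
    positivity
  have nn3 : (0:ℝ) ≤ (B * Abar ^ (1 / qminus)) ^ (qminus * pplus / (qminus * pplus - 1)) := by
    positivity
  have nn4 : (0:ℝ) ≤ (B * Bbar ^ (1 / qminus)) ^ (qminus * pminus / (qminus * pminus - 1)) := by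
    positivity
  have hC : (0:ℝ) < 4 ^ E := Real.rpow_pos_of_pos (by norm_num) E
  rcases hbig with h | h | h | h
  · exact (key qplus pplus _ hq0 hq2 hp0 hp2 (by positivity) h).trans
      (mul_le_mul_of_nonneg_left (by linarith) hC.le)
  · exact (key qplus pminus _ hq0 hq2 hp1 le_rfl (by positivity) h).trans
      (mul_le_mul_of_nonneg_left (by linarith) hC.le)
  · exact (key qminus pplus _ hq1 le_rfl hp0 hp2 (by positivity) h).trans
      (mul_le_mul_of_nonneg_left (by linarith) hC.le)
  · exact (key qminus pminus _ hq1 le_rfl hp1 le_rfl (by positivity) h).trans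
      (mul_le_mul_of_nonneg_left (by linarith) hC.le)
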